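/- Let T be a non-blocking tree and T' a subtree of T. Then T' is finite if and only if there exist a node τ ∈ T and an infinite tree T∞ ⊆ T such that: τ ∈ T∞ and T∞ is finitely-branching; every infinite path of T∞ visits some strict descendant of τ in T; and T' = T∞ \ {τ' ∈ T : τ < τ'} (where τ < τ' means τ' is a descendant of τ distinct from τ). -/

import Mathlib

/-! ## Trees over ℕ* -/

abbrev Node : Type := List ℕ

/-- `T` is a tree with root `r`: `r ∈ T`, every node extends `r`, and `T` is
prefix-closed above `r`. -/
def IsTreeRooted (T : Set Node) (r : Node) : Prop :=
  r ∈ T ∧ (∀ τ ∈ T, r <+: τ) ∧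
    ∀ σ σ' : List ℕ, r ++ σ ∈ T → σ' <+: σ → r ++ σ' ∈ T

/-- `T ⊆ ℕ*` is a tree. -/
def IsTree (T : Set Node) : Prop := ∃ r : Node, IsTreeRooted T r

/-- `τ'` is a child of `τ` in `T`. -/
def childIn (T : Set Node) (τ τ' : Node) : Prop := τ' ∈ T ∧ ∃ n : ℕ, τ' = τ ++ [n]

/-- every node of `T` has a child in `T`. -/
def NonBlocking (T : Set Node) : Prop := ∀ τ ∈ T, ∃ n : ℕ, τ ++ [n] ∈ T

/-- every node of `T` has finitely many children in `T`. -/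
def FinBranching (T : Set Node) : Prop := ∀ τ ∈ T, {τ' : Node | childIn T τ τ'}.Finite

/-- `S` is a subtree of `T`. -/
def IsSubtree (T S : Set Node) : Prop := S ⊆ T ∧ IsTree S

/-- `P` is a path of `T`: a subtree totally ordered by the child relation
(each node has at most one child in `P`). -/
def IsPathOf (T P : Set Node) : Prop :=
  IsSubtree T P ∧ ∀ τ ∈ P, ∀ n m : ℕ, τ ++ [n] ∈ P → τ ++ [m] ∈ P → n = m

/-- `T` is a chain: a tree in which each node has at most one child. -/
def IsChainTree (T : Set Node) : Prop :=
  IsTree T ∧ ∀ τ ∈ T, ∀ n m : ℕ, τ ++ [n] ∈ T → τ ++ [m] ∈ T → n = m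

/-- `T` is dense: it contains a subtree every node of which has a descendant
in the subtree with at least two distinct children in the subtree. -/
def DenseTree (T : Set Node) : Prop :=
  ∃ S : Set Node, IsSubtree T S ∧ ∀ τ ∈ S, ∃ τ' ∈ S, τ <+: τ' ∧
    ∃ n m : ℕ, n ≠ m ∧ τ' ++ [n] ∈ S ∧ τ' ++ [m] ∈ S

/-- A Kripke tree over `AP`: a non-blocking tree together with a labelling. -/
structure KripkeTree (AP : Type) where
  T : Set Node
  root : Node
  rooted : IsTreeRooted T root
  nonblocking : NonBlocking T
  Lab : Node → Set AP

/-! ## MSOL syntax -/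

inductive MSOL (AP : Type) : Type
  | atom : AP → ℕ → MSOL AP          -- P_a(x)
  | le   : ℕ → ℕ → MSOL AP           -- x ≤ y
  | mem  : ℕ → ℕ → MSOL AP           -- x ∈ X
  | not  : MSOL AP → MSOL AP
  | and  : MSOL AP → MSOL AP → MSOL AP
  | exFO : ℕ → MSOL AP → MSOL AP     -- ∃x. φ
  | exSO : ℕ → MSOL AP → MSOL AP     -- ∃X. φ

namespace MSOL

def freeFO {AP : Type} : MSOL AP → Set ℕ
  | atom _ x => {x}
  | le x y => {x, y}
  | mem x _ => {x}
  | not φ => φ.freeFO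
  | and φ ψ => φ.freeFO ∪ ψ.freeFO
  | exFO x φ => φ.freeFO \ {x}
  | exSO _ φ => φ.freeFO

def freeSO {AP : Type} : MSOL AP → Set ℕ
  | atom _ _ => ∅
  | le _ _ => ∅
  | mem _ X => {X}
  | not φ => φ.freeSO
  | and φ ψ => φ.freeSO ∪ ψ.freeSO
  | exFO _ φ => φ.freeSO
  | exSO X φ => φ.freeSO \ {X}

/-- A sentence is a formula with no free variables. -/
def IsSentence {AP : Type} (φ : MSOL AP) : Prop := φ.freeFO = ∅ ∧ φ.freeSO = ∅

/-- The first-order fragment: no second-order variables. -/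
def IsFO {AP : Type} : MSOL AP → Prop
  | atom _ _ => True
  | le _ _ => True
  | mem _ _ => False
  | not φ => φ.IsFO
  | and φ ψ => φ.IsFO ∧ ψ.IsFO
  | exFO _ φ => φ.IsFO
  | exSO _ _ => False

end MSOL

/-! ## MSOL semantics, parametrized by the range of second-order quantifiers -/

/-- A second-order domain: for each tree, the collection of sets that
second-order quantifiers range over. -/
abbrev SODom : Type := Set Node → Set (Set Node)

def Sat {AP : Type} (D : SODom) (K : KripkeTree AP) :
    (ℕ → Node) → (ℕ → Set Node) → MSOL AP → Prop
  | V1, _,  .atom a x => V1 x ∈ K.T ∧ a ∈ K.Lab (V1 x)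
  | V1, _,  .le x y => V1 x ∈ K.T ∧ V1 y ∈ K.T ∧ V1 x <+: V1 y
  | V1, V2, .mem x X => V1 x ∈ V2 X
  | V1, V2, .not φ => ¬ Sat D K V1 V2 φ
  | V1, V2, .and φ ψ => Sat D K V1 V2 φ ∧ Sat D K V1 V2 ψ
  | V1, V2, .exFO x φ => ∃ τ ∈ K.T, Sat D K (Function.update V1 x τ) V2 φ
  | V1, V2, .exSO X φ => ∃ S ∈ D K.T, Sat D K V1 (Function.update V2 X S) φ

/-- A logic: a syntactic fragment of MSOL together with a second-order domain. -/
structure MLogic (AP : Type) where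
  syn : MSOL AP → Prop
  dom : SODom

namespace MLogic

/-- A Kripke tree satisfies a sentence. -/
def KSat {AP : Type} (L : MLogic AP) (K : KripkeTree AP) (φ : MSOL AP) : Prop :=
  ∃ V1 V2, Sat L.dom K V1 V2 φ

/-- `L ≤ L'` over the class `M`. -/
def Leq {AP : Type} (M : Set (KripkeTree AP)) (L L' : MLogic AP) : Prop :=
  ∀ φ : MSOL AP, φ.IsSentence → L.syn φ →
    ∃ φ' : MSOL AP, φ'.IsSentence ∧ L'.syn φ' ∧
      ∀ K ∈ M, (L.KSat K φ ↔ L'.KSat K φ')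

/-- `L < L'` over the class `M`. -/
def Lt {AP : Type} (M : Set (KripkeTree AP)) (L L' : MLogic AP) : Prop :=
  Leq M L L' ∧ ¬ Leq M L' L

/-- `L ≡ L'` over the class `M`. -/
def EquivExp {AP : Type} (M : Set (KripkeTree AP)) (L L' : MLogic AP) : Prop :=
  Leq M L L' ∧ Leq M L' L

/-- `L` and `L'` are expressively incomparable over the class `M`. -/
def Incomp {AP : Type} (M : Set (KripkeTree AP)) (L L' : MLogic AP) : Prop :=
  ¬ Leq M L L' ∧ ¬ Leq M L' L

end MLogic

/-! ## The concrete logics -/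

def MSOdom : SODom := fun T => {S | S ⊆ T}
def MTLdom : SODom := fun T => {S | S ⊆ T ∧ IsTree S}
def MPLdom : SODom := fun T => {S | IsPathOf T S}
def weakDom (D : SODom) : SODom := fun T => {S | S ∈ D T ∧ S.Finite}
def coweakDom (D : SODom) : SODom := fun T => {S | S ∈ D T ∧ S.Infinite}

def MSO (AP : Type) : MLogic AP := ⟨fun _ => True, MSOdom⟩
def MTL (AP : Type) : MLogic AP := ⟨fun _ => True, MTLdom⟩
def MPL (AP : Type) : MLogic AP := ⟨fun _ => True, MPLdom⟩
def WMSO (AP : Type) : MLogic AP := ⟨fun _ => True, weakDom MSOdom⟩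
def WMTL (AP : Type) : MLogic AP := ⟨fun _ => True, weakDom MTLdom⟩
def WMPL (AP : Type) : MLogic AP := ⟨fun _ => True, weakDom MPLdom⟩
def CoWMSO (AP : Type) : MLogic AP := ⟨fun _ => True, coweakDom MSOdom⟩
def CoWMTL (AP : Type) : MLogic AP := ⟨fun _ => True, coweakDom MTLdom⟩
def CoWMPL (AP : Type) : MLogic AP := ⟨fun _ => True, coweakDom MPLdom⟩
def FOL (AP : Type) : MLogic AP := ⟨MSOL.IsFO, MSOdom⟩

/-! ## Classes of Kripke trees -/

def allKT (AP : Type) : Set (KripkeTree AP) := Set.univ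
def finBrKT (AP : Type) : Set (KripkeTree AP) := {K | FinBranching K.T}
/-- Kripke trees whose underlying tree is an infinite chain
(every node has exactly one child). -/
def chainKT (AP : Type) : Set (KripkeTree AP) :=
  {K | ∀ τ ∈ K.T, ∃! τ' : Node, childIn K.T τ τ'}


/-! ### Auxiliary material for stmt12 -/

namespace Stmt12Aux

lemma prefix_eq_of_len {a b c : Node} (ha : a <+: c) (hb : b <+: c)
    (h : a.length = b.length) : a = b :=
  (List.prefix_of_prefix_length_le ha hb h.le).eq_of_length h

lemma prefix_append_mono {r a b : Node} (h : a <+: b) : r ++ a <+: r ++ b :=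
  (List.prefix_append_right_inj r).mpr h

noncomputable def chainSeq (A : Set Node) (h : ∀ x ∈ A, ∃ n : ℕ, x ++ [n] ∈ A)
    (x0 : Node) (hx0 : x0 ∈ A) : ℕ → {x : Node // x ∈ A} :=
  fun k => (fun y : {x : Node // x ∈ A} =>
    (⟨y.1 ++ [(h y.1 y.2).choose], (h y.1 y.2).choose_spec⟩ : {x : Node // x ∈ A}))^[k] ⟨x0, hx0⟩

lemma chainSeq_zero (A : Set Node) (h : ∀ x ∈ A, ∃ n : ℕ, x ++ [n] ∈ A)
    (x0 : Node) (hx0 : x0 ∈ A) : (chainSeq A h x0 hx0 0).1 = x0 := rfl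

lemma chainSeq_succ (A : Set Node) (h : ∀ x ∈ A, ∃ n : ℕ, x ++ [n] ∈ A)
    (x0 : Node) (hx0 : x0 ∈ A) (k : ℕ) :
    ∃ n : ℕ, (chainSeq A h x0 hx0 (k + 1)).1 = (chainSeq A h x0 hx0 k).1 ++ [n] := by
  unfold chainSeq
  rw [Function.iterate_succ_apply']
  exact ⟨_, rfl⟩

lemma chainSeq_length (A : Set Node) (h : ∀ x ∈ A, ∃ n : ℕ, x ++ [n] ∈ A)
    (x0 : Node) (hx0 : x0 ∈ A) (k : ℕ) :
    (chainSeq A h x0 hx0 k).1.length = x0.length + k := by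
  induction k with
  | zero => rfl
  | succ k ih =>
    obtain ⟨n, hn⟩ := chainSeq_succ A h x0 hx0 k
    rw [hn, List.length_append, ih]
    simp [Nat.add_assoc]

lemma chainSeq_prefix (A : Set Node) (h : ∀ x ∈ A, ∃ n : ℕ, x ++ [n] ∈ A)
    (x0 : Node) (hx0 : x0 ∈ A) {j k : ℕ} (hjk : j ≤ k) :
    (chainSeq A h x0 hx0 j).1 <+: (chainSeq A h x0 hx0 k).1 := by
  induction hjk with
  | refl => exact List.prefix_rfl
  | step _ ih =>
    rename_i m _
    obtain ⟨n, hn⟩ := chainSeq_succ A h x0 hx0 m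
    rw [hn]
    exact ih.trans (List.prefix_append _ _)

lemma chainSeq_inj (A : Set Node) (h : ∀ x ∈ A, ∃ n : ℕ, x ++ [n] ∈ A)
    (x0 : Node) (hx0 : x0 ∈ A) :
    Function.Injective (fun k => (chainSeq A h x0 hx0 k).1) := by
  intro a b hab
  have h2 := congrArg List.length hab
  simp only [chainSeq_length] at h2
  omega

/-- The range of `chainSeq` is an infinite chain tree rooted at `x0`. -/
lemma chain_facts (A : Set Node) (h : ∀ x ∈ A, ∃ n : ℕ, x ++ [n] ∈ A)
    (x0 : Node) (hx0 : x0 ∈ A) :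
    (Set.range (fun k => (chainSeq A h x0 hx0 k).1) ⊆ A) ∧
    IsTreeRooted (Set.range (fun k => (chainSeq A h x0 hx0 k).1)) x0 ∧
    (∀ τ : Node, ∀ n m : ℕ,
      τ ++ [n] ∈ Set.range (fun k => (chainSeq A h x0 hx0 k).1) →
      τ ++ [m] ∈ Set.range (fun k => (chainSeq A h x0 hx0 k).1) → n = m) ∧
    (Set.range (fun k => (chainSeq A h x0 hx0 k).1)).Infinite := by
  have hlen : ∀ k, (chainSeq A h x0 hx0 k).1.length = x0.length + k :=
    fun k => chainSeq_length A h x0 hx0 k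
  have hpre : ∀ {j k : ℕ}, j ≤ k → (chainSeq A h x0 hx0 j).1 <+: (chainSeq A h x0 hx0 k).1 :=
    fun hjk => chainSeq_prefix A h x0 hx0 hjk
  refine ⟨?_, ⟨⟨0, rfl⟩, ?_, ?_⟩, ?_, ?_⟩
  · rintro _ ⟨k, rfl⟩; exact (chainSeq A h x0 hx0 k).2
  · rintro _ ⟨k, rfl⟩
    exact hpre (Nat.zero_le k)
  · rintro σ σ' ⟨k, hk⟩ hσ'
    have hk' : (chainSeq A h x0 hx0 k).1 = x0 ++ σ := hk
    refine ⟨σ'.length, ?_⟩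
    have h1 : x0 ++ σ' <+: (chainSeq A h x0 hx0 k).1 := by
      rw [hk']; exact prefix_append_mono hσ'
    have h2 : (chainSeq A h x0 hx0 σ'.length).1 <+: (chainSeq A h x0 hx0 k).1 := by
      apply hpre
      have h3 := congrArg List.length hk'
      rw [List.length_append, hlen k] at h3
      have h4 := hσ'.length_le
      omega
    show (chainSeq A h x0 hx0 σ'.length).1 = x0 ++ σ'
    refine prefix_eq_of_len h2 h1 ?_
    rw [hlen, List.length_append]
  · rintro τ n m ⟨j, hj⟩ ⟨j', hj'⟩
    have hj1 : (chainSeq A h x0 hx0 j).1 = τ ++ [n] := hj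
    have hj2 : (chainSeq A h x0 hx0 j').1 = τ ++ [m] := hj'
    have hjj' : j = j' := by
      have h1 := congrArg List.length hj1
      have h2 := congrArg List.length hj2
      rw [hlen] at h1 h2
      simp only [List.length_append, List.length_cons, List.length_nil] at h1 h2
      omega
    rw [hjj'] at hj1
    have h5 := List.append_cancel_left (hj1.symm.trans hj2)
    simpa using h5
  · exact Set.infinite_range_of_injective (chainSeq_inj A h x0 hx0)

/-- Pigeonhole step for König's lemma. -/
lemma exists_child_inf (S : Set Node) (r : Node) (hS : IsTreeRooted S r)
    (hfb : ∀ x ∈ S, {x' : Node | childIn S x x'}.Finite)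
    (ν : Node) (hν : ν ∈ S) (hinf : {μ | μ ∈ S ∧ ν <+: μ}.Infinite) :
    ∃ n : ℕ, (ν ++ [n] ∈ S ∧ {μ | μ ∈ S ∧ ν ++ [n] <+: μ}.Infinite) := by
  by_contra hcon
  push_neg at hcon
  apply hinf
  obtain ⟨α, rfl⟩ := hS.2.1 ν hν
  have hsub : {μ | μ ∈ S ∧ r ++ α <+: μ} ⊆
      {r ++ α} ∪ ⋃ c ∈ {x' : Node | childIn S (r ++ α) x'}, {μ | μ ∈ S ∧ c <+: μ} := by
    rintro μ ⟨hμS, hpre⟩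
    by_cases hμν : μ = r ++ α
    · exact Or.inl hμν
    · obtain ⟨σ, rfl⟩ := hpre
      have hσ : σ ≠ [] := by rintro rfl; simp at hμν
      have h1 : r ++ (α ++ σ) ∈ S := by rw [← List.append_assoc]; exact hμS
      have h2 : α ++ [σ.head hσ] <+: α ++ σ := by
        apply prefix_append_mono
        exact ⟨σ.tail, by rw [List.singleton_append, List.cons_head_tail]⟩
      have hcS : (r ++ α) ++ [σ.head hσ] ∈ S := by
        have h3 := hS.2.2 (α ++ σ) (α ++ [σ.head hσ]) h1 h2
        rwa [← List.append_assoc] at h3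
      refine Or.inr (Set.mem_biUnion (show childIn S (r ++ α) ((r ++ α) ++ [σ.head hσ])
        from ⟨hcS, σ.head hσ, rfl⟩) ⟨hμS, ?_⟩)
      exact ⟨σ.tail, by rw [List.append_assoc, List.singleton_append, List.cons_head_tail]⟩
  refine Set.Finite.subset ((Set.finite_singleton _).union
    ((hfb _ hν).biUnion fun c hc => ?_)) hsub
  obtain ⟨hcS, n, rfl⟩ := hc
  exact hcon n hcS

end Stmt12Aux

/-- characterisation of the finite subtrees of a non-blocking
tree. -/
theorem stmt12 (T : Set Node) (hT : IsTree T) (hNB : NonBlocking T)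
    (T' : Set Node) (hT' : IsSubtree T T') :
    T'.Finite ↔
      ∃ τ ∈ T, ∃ Tinf : Set Node,
        IsSubtree T Tinf ∧ Tinf.Infinite ∧
        τ ∈ Tinf ∧ FinBranching Tinf ∧
        (∀ P : Set Node, IsPathOf Tinf P → P.Infinite →
          ∃ τ' ∈ P, τ' ∈ T ∧ τ <+: τ' ∧ τ ≠ τ') ∧
        T' = Tinf \ {τ' : Node | τ' ∈ T ∧ τ <+: τ' ∧ τ' ≠ τ} := by
  classical
  open Stmt12Aux in
  constructor
  · -- forward direction
    intro hfin
    obtain ⟨r', hr'⟩ := hT'.2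
    have hne : T'.Nonempty := ⟨r', hr'.1⟩
    obtain ⟨τ, hτT', hmax0⟩ := Set.Finite.exists_maximalFor List.length T' hfin hne
    have hmax : ∀ x ∈ T', τ.length ≤ x.length → τ.length = x.length :=
      fun x hx h => le_antisymm h (hmax0 hx h)
    have hτT : τ ∈ T := hT'.1 hτT'
    have hmax' : ∀ x ∈ T', τ <+: x → x = τ :=
      fun x hx hpre => (hpre.eq_of_length (hmax x hx hpre.length_le)).symm
    set ν : ℕ → Node := fun k => (chainSeq T hNB τ hτT k).1 with hνdef
    have hνT : ∀ k, ν k ∈ T := fun k => (chainSeq T hNB τ hτT k).2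
    have hlen : ∀ k, (ν k).length = τ.length + k := fun k => chainSeq_length T hNB τ hτT k
    have hpre : ∀ {j k : ℕ}, j ≤ k → ν j <+: ν k := fun hjk => chainSeq_prefix T hNB τ hτT hjk
    have hν0 : ν 0 = τ := rfl
    set B : Set Node := Set.range ν with hBdef
    set Tinf : Set Node := T' ∪ B with hTinfdef
    have hBinf : B.Infinite := Set.infinite_range_of_injective (chainSeq_inj T hNB τ hτT)
    have hTinfT : Tinf ⊆ T := by
      rintro x (hx | ⟨k, rfl⟩)
      · exact hT'.1 hx
      · exact hνT k
    refine ⟨τ, hτT, Tinf, ⟨hTinfT, ⟨r', ?_, ?_, ?_⟩⟩, hBinf.mono Set.subset_union_right,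
      Or.inr ⟨0, rfl⟩, ?_, ?_, ?_⟩
    · exact Or.inl hr'.1
    · rintro x (hx | ⟨k, rfl⟩)
      · exact hr'.2.1 x hx
      · exact (hr'.2.1 τ hτT').trans (hpre (Nat.zero_le k))
    · rintro σ σ' hσ hσ'
      rcases hσ with hσ | ⟨k, hk⟩
      · exact Or.inl (hr'.2.2 σ σ' hσ hσ')
      · have hp : r' ++ σ' <+: ν k := by rw [hk]; exact prefix_append_mono hσ'
        by_cases hle : (r' ++ σ').length ≤ τ.length
        · have hτνk : τ <+: ν k := hpre (Nat.zero_le k)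
          have hpτ : r' ++ σ' <+: τ := List.prefix_of_prefix_length_le hp hτνk hle
          obtain ⟨α, hα⟩ := hr'.2.1 τ hτT'
          have hσ'α : σ' <+: α := by
            rw [← hα] at hpτ
            exact (List.prefix_append_right_inj r').mp hpτ
          refine Or.inl ?_
          have := hr'.2.2 α σ' (by rw [hα]; exact hτT') hσ'α
          exact this
        · push_neg at hle
          refine Or.inr ⟨(r' ++ σ').length - τ.length, ?_⟩
          have hjk : (r' ++ σ').length - τ.length ≤ k := by
            have h1 := hp.length_le
            rw [hlen k] at h1
            omega
          refine prefix_eq_of_len (hpre hjk) hp ?_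
          rw [hlen]
          omega
    · -- finite branching
      intro x hx
      have hsub : {x' : Node | childIn Tinf x x'} ⊆
          T' ∪ {ν (x.length + 1 - τ.length)} := by
        rintro x' ⟨hx'Tinf, n, rfl⟩
        rcases hx'Tinf with hx' | ⟨k, hk⟩
        · exact Or.inl hx'
        · refine Or.inr ?_
          have h1 := congrArg List.length hk
          rw [hlen k, List.length_append, List.length_cons, List.length_nil] at h1
          have hkeq : k = x.length + 1 - τ.length := by omega
          rw [Set.mem_singleton_iff, ← hk, hkeq]
      exact Set.Finite.subset (hfin.union (Set.finite_singleton _)) hsub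
    · -- infinite paths hit strict descendants of τ
      intro P hP hPinf
      have hPB : P \ T' ⊆ B := by
        rintro x ⟨hxP, hxT'⟩
        rcases hP.1.1 hxP with hx | hx
        · exact absurd hx hxT'
        · exact hx
      obtain ⟨x, hx⟩ := ((hPinf.diff hfin).diff (Set.finite_singleton τ)).nonempty
      obtain ⟨hxPT', hxτ⟩ := hx
      have hxτ' : x ≠ τ := by simpa using hxτ
      obtain ⟨k, rfl⟩ := hPB hxPT'
      have hk0 : k ≠ 0 := by rintro rfl; exact hxτ' hν0
      refine ⟨ν k, hxPT'.1, hνT k, hpre (Nat.zero_le k), fun hcon => ?_⟩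
      exact hxτ' hcon.symm
    · -- the set equality
      ext x
      constructor
      · intro hx
        refine ⟨Or.inl hx, ?_⟩
        rintro ⟨hxT, hxpre, hxne⟩
        exact hxne (hmax' x hx hxpre)
      · rintro ⟨hxTinf, hxD⟩
        rcases hxTinf with hx | ⟨k, rfl⟩
        · exact hx
        · rcases Nat.eq_zero_or_pos k with rfl | hk
          · exact hτT'
          · exfalso
            refine hxD ⟨hνT k, hpre (Nat.zero_le k), ?_⟩
            intro hcon
            have := congrArg List.length hcon
            rw [hlen k] at this
            omega
  · -- backward direction
    rintro ⟨τ, hτT, Tinf, ⟨hTinfT, hTinfTree⟩, _hTinfInf, hτTinf, hFB, hpath, hTeq⟩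
    by_contra hfin
    have hT'inf : T'.Infinite := hfin
    obtain ⟨r, hr⟩ := hTinfTree
    have hT'Tinf : T' ⊆ Tinf := by rw [hTeq]; exact Set.diff_subset
    have hrT' : r ∈ T' := by
      rw [hTeq]
      refine ⟨hr.1, ?_⟩
      rintro ⟨_, hpre, hne⟩
      have hrτ : r <+: τ := hr.2.1 τ hτTinf
      exact hne (hpre.eq_of_length (le_antisymm hpre.length_le hrτ.length_le)).symm
    have hT'rooted : IsTreeRooted T' r := by
      refine ⟨hrT', fun x hx => hr.2.1 x (hT'Tinf hx), ?_⟩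
      intro σ σ' hσ hσ'
      have hmemTinf : r ++ σ' ∈ Tinf := hr.2.2 σ σ' (hT'Tinf hσ) hσ'
      rw [hTeq]
      refine ⟨hmemTinf, ?_⟩
      rintro ⟨hmemT, hpre, hne⟩
      have hp : r ++ σ' <+: r ++ σ := prefix_append_mono hσ'
      have hσD : r ++ σ ∈ {τ' : Node | τ' ∈ T ∧ τ <+: τ' ∧ τ' ≠ τ} := by
        refine ⟨hTinfT (hT'Tinf hσ), hpre.trans hp, ?_⟩
        intro hcon
        have h1 : τ.length < (r ++ σ').length := by
          rcases lt_or_eq_of_le hpre.length_le with h | h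
          · exact h
          · exact absurd (hpre.eq_of_length h).symm hne
        have h2 := hp.length_le
        have h3 := congrArg List.length hcon
        omega
      rw [hTeq] at hσ
      exact hσ.2 hσD
    have hT'fb : ∀ x ∈ T', {x' : Node | childIn T' x x'}.Finite := by
      intro x hx
      refine Set.Finite.subset (hFB x (hT'Tinf hx)) ?_
      rintro x' ⟨hx', n, rfl⟩
      exact ⟨hT'Tinf hx', n, rfl⟩
    -- König's lemma construction
    set A : Set Node := {x | x ∈ T' ∧ {μ | μ ∈ T' ∧ x <+: μ}.Infinite} with hAdef
    have hstep : ∀ x ∈ A, ∃ n : ℕ, x ++ [n] ∈ A := by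
      rintro x ⟨hx1, hx2⟩
      obtain ⟨n, hn1, hn2⟩ := exists_child_inf T' r hT'rooted hT'fb x hx1 hx2
      exact ⟨n, hn1, hn2⟩
    have hrA : r ∈ A := by
      refine ⟨hrT', hT'inf.mono ?_⟩
      exact fun μ hμ => ⟨hμ, hr.2.1 μ (hT'Tinf hμ)⟩
    obtain ⟨hPA, hProoted, hPchain, hPinf⟩ := chain_facts A hstep r hrA
    set P : Set Node := Set.range (fun k => (chainSeq A hstep r hrA k).1) with hPdef
    have hPT' : P ⊆ T' := fun x hx => (hPA hx).1
    have hPpath : IsPathOf Tinf P := by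
      refine ⟨⟨fun x hx => hT'Tinf (hPT' hx), ⟨r, hProoted⟩⟩, ?_⟩
      intro x _ n m h1 h2
      exact hPchain x n m h1 h2
    obtain ⟨τ', hτ'P, hτ'T, hττ', hneq⟩ := hpath P hPpath hPinf
    have hτ'T' : τ' ∈ T' := hPT' hτ'P
    rw [hTeq] at hτ'T'
    exact hτ'T'.2 ⟨hτ'T, hττ', hneq.symm⟩
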